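/- Let g be holomorphic on the open unit disk and continuous on the closed unit disk, with g(0) = 1, g nonvanishing on the closed disk, and ∫_0^{2π} |g(e^{iθ})|^q dθ/(2π) = 1 for some q > 0. Then g ≡ 1. -/

import Mathlib

open MeasureTheory Set

/-- A continuous nonnegative function on `[0, 2π]` with vanishing integral vanishes. -/
lemma aux_zero (F : ℝ → ℝ) (hF : Continuous F) (h0 : ∀ θ, 0 ≤ F θ)
    (hI : (∫ θ in (0:ℝ)..2 * Real.pi, F θ) = 0) :
    ∀ θ ∈ Set.Icc (0:ℝ) (2 * Real.pi), F θ = 0 := by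
  intro θ0 hθ0
  by_contra hne
  have hpos : 0 < F θ0 := (h0 θ0).lt_of_ne (Ne.symm hne)
  have hev : ∀ᶠ x in nhds θ0, 0 < F x :=
    (hF.continuousAt (x := θ0)).eventually (eventually_gt_nhds hpos)
  obtain ⟨ε, hε, hball⟩ := Metric.eventually_nhds_iff.1 hev
  have hπ : 0 < Real.pi := Real.pi_pos
  set a := max (θ0 - ε / 2) 0 with ha
  set b := min (θ0 + ε / 2) (2 * Real.pi) with hb
  have hab : a < b := by
    rw [ha, hb, max_lt_iff, lt_min_iff, lt_min_iff]
    refine ⟨⟨by linarith, by linarith [hθ0.2]⟩, ⟨by linarith [hθ0.1], by linarith⟩⟩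
  have hsub : ∀ x ∈ Set.Ioo a b, 0 < F x := by
    intro x hx
    apply hball
    rw [Real.dist_eq, abs_lt]
    have h1 : θ0 - ε / 2 ≤ a := le_max_left _ _
    have h2 : b ≤ θ0 + ε / 2 := min_le_left _ _
    exact ⟨by linarith [hx.1], by linarith [hx.2]⟩
  have h0a : (0:ℝ) ≤ a := le_max_right _ _
  have hb2 : b ≤ 2 * Real.pi := min_le_right _ _
  have hint : ∀ u v : ℝ, IntervalIntegrable F volume u v := fun u v =>
    hF.intervalIntegrable u v
  have hmid : 0 < ∫ x in a..b, F x :=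
    intervalIntegral.intervalIntegral_pos_of_pos_on (hint a b) hsub hab
  have h1 : (0:ℝ) ≤ ∫ x in (0:ℝ)..a, F x :=
    intervalIntegral.integral_nonneg h0a fun x _ => h0 x
  have h2 : (0:ℝ) ≤ ∫ x in b..(2 * Real.pi), F x :=
    intervalIntegral.integral_nonneg hb2 fun x _ => h0 x
  have hsplit : (∫ θ in (0:ℝ)..2 * Real.pi, F θ)
      = (∫ x in (0:ℝ)..a, F x) + ((∫ x in a..b, F x) + ∫ x in b..(2 * Real.pi), F x) := by
    rw [intervalIntegral.integral_add_adjacent_intervals (hint a b) (hint b _),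
      intervalIntegral.integral_add_adjacent_intervals (hint 0 a) (hint a _)]
  rw [hsplit] at hI
  linarith

/-- Every point of the unit circle is `exp (θ i)` for some `θ ∈ [0, 2π]`. -/
lemma exists_angle (z : ℂ) (hz : ‖z‖ = 1) :
    ∃ θ ∈ Set.Icc (0:ℝ) (2 * Real.pi), Complex.exp (θ * Complex.I) = z := by
  have hπ : 0 < Real.pi := Real.pi_pos
  have habs : ‖z‖ = 1 := hz
  have key : Complex.exp (z.arg * Complex.I) = z := by
    have := Complex.norm_mul_exp_arg_mul_I z
    rwa [habs, Complex.ofReal_one, one_mul] at this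
  rcases le_or_gt 0 z.arg with h | h
  · exact ⟨z.arg, ⟨h, (Complex.arg_le_pi z).trans (by linarith)⟩, key⟩
  · refine ⟨z.arg + 2 * Real.pi, ⟨by linarith [Complex.neg_pi_lt_arg z], by linarith [Complex.arg_le_pi z]⟩, ?_⟩
    have heq : ((z.arg + 2 * Real.pi : ℝ) : ℂ) * Complex.I
        = z.arg * Complex.I + 2 * Real.pi * Complex.I := by push_cast; ring
    rw [heq, Complex.exp_add, Complex.exp_two_pi_mul_I, mul_one, key]

/-- Continuous extension of a constant from the open ball to the closed ball. -/
lemma eq_on_closed_of_eq_on_ball (f : ℂ → ℂ) (c : ℂ)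
    (hfc : ContinuousOn f (Metric.closedBall 0 1))
    (h : ∀ z ∈ Metric.ball (0:ℂ) 1, f z = c) :
    ∀ z ∈ Metric.closedBall (0:ℂ) 1, f z = c := by
  intro z hz
  have hzn : ‖z‖ ≤ 1 := by simpa [Metric.mem_closedBall] using hz
  have h1 : Filter.Tendsto (fun r : ℝ => (r : ℂ) * z) (nhdsWithin 1 (Set.Iio 1)) (nhds z) := by
    have h1' : Filter.Tendsto (fun r : ℝ => (r : ℂ) * z) (nhds 1) (nhds z) := by
      have hcont : Continuous (fun r : ℝ => (r : ℂ) * z) := by continuity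
      simpa using hcont.tendsto (1:ℝ)
    exact h1'.mono_left nhdsWithin_le_nhds
  have hev : ∀ᶠ r : ℝ in nhdsWithin 1 (Set.Iio 1), (r : ℂ) * z ∈ Metric.ball (0:ℂ) 1 := by
    have hev0 : ∀ᶠ r : ℝ in nhdsWithin 1 (Set.Iio 1), 0 < r :=
      Filter.Eventually.filter_mono nhdsWithin_le_nhds (eventually_gt_nhds one_pos)
    have hev1 : ∀ᶠ r : ℝ in nhdsWithin 1 (Set.Iio 1), r ∈ Set.Iio (1:ℝ) :=
      eventually_mem_nhdsWithin
    filter_upwards [hev0, hev1] with r hr0 hr1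
    have : ‖(r : ℂ) * z‖ = |r| * ‖z‖ := by
      rw [norm_mul, Complex.norm_real, Real.norm_eq_abs]
    rw [Metric.mem_ball, dist_zero_right, this, abs_of_pos hr0]
    calc r * ‖z‖ ≤ r * 1 := by nlinarith
    _ < 1 := by simpa using hr1
  have htz : Filter.Tendsto (fun r : ℝ => (r:ℂ)*z) (nhdsWithin 1 (Set.Iio 1))
      (nhdsWithin z (Metric.closedBall 0 1)) :=
    tendsto_nhdsWithin_of_tendsto_nhds_of_eventually_within _ h1
      (hev.mono fun r hr => Metric.ball_subset_closedBall hr)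
  have hc2 : Filter.Tendsto (fun r : ℝ => f ((r:ℂ)*z)) (nhdsWithin 1 (Set.Iio 1))
      (nhds (f z)) := (hfc z hz).tendsto.comp htz
  have hc3 : Filter.Tendsto (fun _ : ℝ => c) (nhdsWithin 1 (Set.Iio 1)) (nhds (f z)) :=
    hc2.congr' (hev.mono fun r hr => h _ hr) |>.congr (fun _ => rfl)
  exact tendsto_nhds_unique hc3 tendsto_const_nhds

/-- Existence of a holomorphic logarithm on the closed unit disk. -/
lemma exists_log (g : ℂ → ℂ) (hgc : ContinuousOn g (Metric.closedBall 0 1))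
    (hg : DifferentiableOn ℂ g (Metric.ball 0 1)) (hg0 : g 0 = 1)
    (hnv : ∀ z ∈ Metric.closedBall (0:ℂ) 1, g z ≠ 0) :
    ∃ L : ℂ → ℂ, ContinuousOn L (Metric.closedBall 0 1) ∧
      DifferentiableOn ℂ L (Metric.ball 0 1) ∧ L 0 = 0 ∧
      ∀ z ∈ Metric.closedBall (0:ℂ) 1, Complex.exp (L z) = g z := by
  obtain ⟨z0, hz0, hmin'⟩ := (isCompact_closedBall (0:ℂ) 1).exists_isMinOn
    ⟨0, by simp⟩ hgc.norm
  have hmin : ∀ z ∈ Metric.closedBall (0:ℂ) 1, ‖g z0‖ ≤ ‖g z‖ := fun z hz => hmin' hz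
  set m := ‖g z0‖ with hm
  have hm0 : 0 < m := norm_pos_iff.2 (hnv z0 hz0)
  have hmaps : ∀ p : ℝ × ℂ, p ∈ Set.Icc (0:ℝ) 1 ×ˢ Metric.closedBall (0:ℂ) 1 →
      (p.1 : ℂ) * p.2 ∈ Metric.closedBall (0:ℂ) 1 := by
    intro p hp
    obtain ⟨⟨h0, h1⟩, hz⟩ := hp
    rw [Metric.mem_closedBall, dist_zero_right] at hz ⊢
    rw [norm_mul, Complex.norm_real, Real.norm_eq_abs, abs_of_nonneg h0]
    nlinarith
  have hGc : ContinuousOn (fun p : ℝ × ℂ => g ((p.1 : ℂ) * p.2))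
      (Set.Icc (0:ℝ) 1 ×ˢ Metric.closedBall (0:ℂ) 1) := by
    apply hgc.comp
    · exact ((Complex.continuous_ofReal.comp continuous_fst).mul continuous_snd).continuousOn
    · exact hmaps
  have hK : IsCompact (Set.Icc (0:ℝ) 1 ×ˢ Metric.closedBall (0:ℂ) 1) :=
    isCompact_Icc.prod (isCompact_closedBall _ _)
  have hUC := hK.uniformContinuousOn_of_continuous hGc
  rw [Metric.uniformContinuousOn_iff] at hUC
  obtain ⟨δ, hδ, hδ'⟩ := hUC m hm0
  obtain ⟨n, hn⟩ := exists_nat_one_div_lt hδ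
  set N := n + 1 with hN
  have hNpos : (0:ℝ) < (N:ℝ) := by positivity
  set c : ℕ → ℂ := fun j => (((j:ℝ) / (N:ℝ) : ℝ) : ℂ) with hc
  set w : ℕ → ℂ → ℂ := fun j z => g (c (j+1) * z) / g (c j * z) with hw
  -- membership facts
  have hratio : ∀ j : ℕ, j ≤ N → ((j:ℝ) / (N:ℝ)) ∈ Set.Icc (0:ℝ) 1 := by
    intro j hj
    constructor
    · positivity
    · rw [div_le_one hNpos]
      exact_mod_cast hj
  have fact1 : ∀ j : ℕ, j ≤ N → ∀ z ∈ Metric.closedBall (0:ℂ) 1,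
      c j * z ∈ Metric.closedBall (0:ℂ) 1 := by
    intro j hj z hz
    exact hmaps ((j:ℝ)/(N:ℝ), z) ⟨hratio j hj, hz⟩
  have fact1b : ∀ j : ℕ, j ≤ N → ∀ z ∈ Metric.ball (0:ℂ) 1,
      c j * z ∈ Metric.ball (0:ℂ) 1 := by
    intro j hj z hz
    rw [Metric.mem_ball, dist_zero_right] at hz ⊢
    rw [norm_mul]
    have h1 : ‖c j‖ ≤ 1 := by
      rw [hc, Complex.norm_real, Real.norm_eq_abs, abs_of_nonneg (hratio j hj).1]
      exact (hratio j hj).2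
    nlinarith [norm_nonneg (c j), norm_nonneg z]
  have fact2 : ∀ j : ℕ, j < N → ∀ z ∈ Metric.closedBall (0:ℂ) 1,
      ‖g (c (j+1) * z) - g (c j * z)‖ < m := by
    intro j hj z hz
    have hj1 : j + 1 ≤ N := hj
    have hmem1 : (((j:ℝ)+1)/(N:ℝ), z) ∈ Set.Icc (0:ℝ) 1 ×ˢ Metric.closedBall (0:ℂ) 1 := by
      refine ⟨?_, hz⟩
      have := hratio (j+1) hj1
      push_cast at this ⊢
      exact this
    have hmem0 : ((j:ℝ)/(N:ℝ), z) ∈ Set.Icc (0:ℝ) 1 ×ˢ Metric.closedBall (0:ℂ) 1 :=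
      ⟨hratio j (le_of_lt hj), hz⟩
    have hdist : dist ((((j:ℝ)+1)/(N:ℝ), z) : ℝ × ℂ) (((j:ℝ)/(N:ℝ), z) : ℝ × ℂ) < δ := by
      rw [Prod.dist_eq]
      apply max_lt
      · rw [Real.dist_eq]
        have : ((j:ℝ)+1)/(N:ℝ) - (j:ℝ)/(N:ℝ) = 1/(N:ℝ) := by field_simp; ring
        rw [this, abs_of_pos (by positivity)]
        have h11 : (1:ℝ)/(N:ℝ) = 1/((n:ℝ)+1) := by rw [hN]; push_cast; ring
        rw [h11]; exact hn
      · simpa using hδ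
    have := hδ' _ hmem1 _ hmem0 hdist
    rw [dist_eq_norm] at this
    have hcast : ((((j:ℝ)+1)/(N:ℝ) : ℝ) : ℂ) = c (j+1) := by
      rw [hc]; push_cast; ring_nf
    rw [hcast] at this
    exact this
  have fact3 : ∀ j : ℕ, j < N → ∀ z ∈ Metric.closedBall (0:ℂ) 1,
      0 < (w j z).re := by
    intro j hj z hz
    have hne : g (c j * z) ≠ 0 := hnv _ (fact1 j (le_of_lt hj) z hz)
    have hlow : m ≤ ‖g (c j * z)‖ := hmin _ (fact1 j (le_of_lt hj) z hz)
    have hsub : w j z - 1 = (g (c (j+1) * z) - g (c j * z)) / g (c j * z) := by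
      show g (c (j+1) * z) / g (c j * z) - 1 = _
      exact div_sub_one hne
    have hlt : ‖w j z - 1‖ < 1 := by
      rw [hsub, norm_div]
      rw [div_lt_one (lt_of_lt_of_le hm0 hlow)]
      exact lt_of_lt_of_le (fact2 j hj z hz) hlow
    have hre : |(w j z - 1).re| ≤ ‖w j z - 1‖ := Complex.abs_re_le_norm _
    rw [Complex.sub_re, Complex.one_re] at hre
    have := abs_lt.1 (lt_of_le_of_lt hre hlt)
    linarith [this.1]
  have fact3' : ∀ j : ℕ, j < N → ∀ z ∈ Metric.closedBall (0:ℂ) 1,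
      w j z ∈ Complex.slitPlane := fun j hj z hz => Or.inl (fact3 j hj z hz)
  have fact3'' : ∀ j : ℕ, j < N → ∀ z ∈ Metric.closedBall (0:ℂ) 1, w j z ≠ 0 := by
    intro j hj z hz h
    have := fact3 j hj z hz
    rw [h] at this
    simp at this
  refine ⟨fun z => ∑ j ∈ Finset.range N, Complex.log (w j z), ?_, ?_, ?_, ?_⟩
  · apply continuousOn_finset_sum
    intro j hj
    rw [Finset.mem_range] at hj
    refine ContinuousOn.clog ?_ (fun z hz => fact3' j hj z hz)
    have hcomp : ∀ i : ℕ, i ≤ N → ContinuousOn (fun z => g (c i * z))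
        (Metric.closedBall (0:ℂ) 1) :=
      fun i hi => hgc.comp ((continuous_const.mul continuous_id).continuousOn)
        (fun z hz => fact1 i hi z hz)
    exact (hcomp (j+1) hj).div (hcomp j (le_of_lt hj))
      (fun z hz => hnv _ (fact1 j (le_of_lt hj) z hz))
  · apply DifferentiableOn.fun_sum
    intro j hj
    rw [Finset.mem_range] at hj
    refine DifferentiableOn.clog ?_
      (fun z hz => fact3' j hj z (Metric.ball_subset_closedBall hz))
    have hcomp : ∀ i : ℕ, i ≤ N → DifferentiableOn ℂ (fun z => g (c i * z))
        (Metric.ball (0:ℂ) 1) :=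
      fun i hi => hg.comp ((differentiable_const _ |>.mul differentiable_id).differentiableOn)
        (fun z hz => fact1b i hi z hz)
    exact (hcomp (j+1) hj).div (hcomp j (le_of_lt hj))
      (fun z hz => hnv _ (fact1 j (le_of_lt hj) z (Metric.ball_subset_closedBall hz)))
  · apply Finset.sum_eq_zero
    intro j hj
    have : w j 0 = 1 := by
      rw [hw]
      simp [hg0]
    rw [this, Complex.log_one]
  · have key : ∀ k : ℕ, k ≤ N → ∀ z ∈ Metric.closedBall (0:ℂ) 1,
        Complex.exp (∑ j ∈ Finset.range k, Complex.log (w j z)) = g (c k * z) := by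
      intro k
      induction k with
      | zero =>
        intro _ z _
        simp [hc, hg0]
      | succ k ih =>
        intro hk z hz
        have hkN : k < N := hk
        rw [Finset.sum_range_succ, Complex.exp_add, ih (le_of_lt hkN) z hz,
          Complex.exp_log (fact3'' k hkN z hz), hw]
        rw [mul_comm, div_mul_cancel₀]
        exact hnv _ (fact1 k (le_of_lt hkN) z hz)
    intro z hz
    have := key N le_rfl z hz
    rw [this]
    have : c N = 1 := by
      simp only [hc]
      rw [div_self (ne_of_gt hNpos)]
      norm_num
    rw [this, one_mul]

theorem stmt7 (q : ℝ) (hq : 0 < q) (g : ℂ → ℂ)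
    (hgc : ContinuousOn g (Metric.closedBall 0 1))
    (hg : DifferentiableOn ℂ g (Metric.ball 0 1))
    (hg0 : g 0 = 1)
    (hnv : ∀ z ∈ Metric.closedBall (0:ℂ) 1, g z ≠ 0)
    (hmean : (∫ θ in (0:ℝ)..2 * Real.pi, ‖g (Complex.exp (θ * Complex.I))‖ ^ q) / (2 * Real.pi)
      = 1) :
    ∀ z ∈ Metric.closedBall (0:ℂ) 1, g z = 1 := by
  have hπ : 0 < Real.pi := Real.pi_pos
  obtain ⟨L, hLc, hLd, hL0, hLg⟩ := exists_log g hgc hg hg0 hnv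
  set f : ℂ → ℂ := fun z => Complex.exp ((q:ℂ) * L z) with hfdef
  have hfc : ContinuousOn f (Metric.closedBall 0 1) :=
    Complex.continuous_exp.comp_continuousOn (continuousOn_const.mul hLc)
  have hfd : DifferentiableOn ℂ f (Metric.ball 0 1) :=
    ((hLd.const_mul _).cexp)
  have hf0 : f 0 = 1 := by rw [hfdef]; simp [hL0]
  have hgnorm : ∀ z ∈ Metric.closedBall (0:ℂ) 1, ‖g z‖ = Real.exp ((L z).re) := by
    intro z hz
    rw [← hLg z hz, Complex.norm_exp]
  have hfnorm' : ∀ z : ℂ, ‖f z‖ = Real.exp (q * (L z).re) := by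
    intro z
    rw [hfdef]
    simp only
    rw [Complex.norm_exp]
    congr 1
    simp [Complex.mul_re]
  have hfnorm : ∀ z ∈ Metric.closedBall (0:ℂ) 1, ‖f z‖ = ‖g z‖ ^ q := by
    intro z hz
    rw [hgnorm z hz, hfnorm', ← Real.exp_mul, mul_comm]
  -- mean value property
  have hDCC : DiffContOnCl ℂ f (Metric.ball 0 1) :=
    ⟨hfd, by rw [closure_ball (0:ℂ) one_ne_zero]; exact hfc⟩
  have hcauchy := hDCC.circleIntegral_sub_inv_smul (Metric.mem_ball_self one_pos)
  have hmemcirc : ∀ θ : ℝ, Complex.exp (θ * Complex.I) ∈ Metric.closedBall (0:ℂ) 1 := by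
    intro θ
    rw [Metric.mem_closedBall, dist_zero_right, Complex.norm_exp]
    simp
  have hcont_circ : Continuous fun θ : ℝ => f (Complex.exp (θ * Complex.I)) := by
    apply hfc.comp_continuous
    · continuity
    · exact hmemcirc
  have hint : (∫ θ in (0:ℝ)..2*Real.pi, f (Complex.exp (θ * Complex.I))) = 2*Real.pi := by
    have h1 : (∮ z in C(0, 1), (z - 0)⁻¹ • f z)
        = ∫ θ in (0:ℝ)..2*Real.pi, Complex.I • f (Complex.exp (θ * Complex.I)) := by
      rw [circleIntegral]
      apply intervalIntegral.integral_congr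
      intro θ _
      simp only [deriv_circleMap, circleMap, Complex.ofReal_one, zero_add, one_mul, sub_zero,
        smul_eq_mul]
      field_simp [Complex.exp_ne_zero]
    rw [h1, intervalIntegral.integral_smul, hf0] at hcauchy
    have h2 : Complex.I • (∫ θ in (0:ℝ)..2*Real.pi, f (Complex.exp (θ * Complex.I)))
        = Complex.I • ((2*Real.pi : ℝ) : ℂ) := by
      rw [hcauchy]
      simp only [smul_eq_mul, mul_one]
      push_cast
      ring
    have h3 := smul_right_injective ℂ Complex.I_ne_zero h2
    rw [h3]
    push_cast
    ring
  -- real part of the mean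
  have hre : (∫ θ in (0:ℝ)..2*Real.pi, (f (Complex.exp (θ * Complex.I))).re) = 2*Real.pi := by
    have hii := ContinuousLinearMap.intervalIntegral_comp_comm (μ := volume) Complex.reCLM
      (hcont_circ.intervalIntegrable 0 (2*Real.pi))
    simp only [Complex.reCLM_apply] at hii
    rw [hii, hint]
    norm_num
  -- integral of the norm
  have hnormint : (∫ θ in (0:ℝ)..2*Real.pi, ‖f (Complex.exp (θ * Complex.I))‖) = 2*Real.pi := by
    have hme : (∫ θ in (0:ℝ)..2*Real.pi, ‖g (Complex.exp (θ*Complex.I))‖ ^ q) = 2*Real.pi := by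
      rw [div_eq_one_iff_eq (by positivity : (2*Real.pi) ≠ 0)] at hmean
      exact hmean
    have hcongr : (∫ θ in (0:ℝ)..2*Real.pi, ‖f (Complex.exp (θ * Complex.I))‖)
        = ∫ θ in (0:ℝ)..2*Real.pi, ‖g (Complex.exp (θ*Complex.I))‖ ^ q :=
      intervalIntegral.integral_congr (fun θ _ => hfnorm _ (hmemcirc θ))
    rw [hcongr, hme]
  -- equality case of the triangle inequality on the boundary
  have hbd : ∀ θ ∈ Set.Icc (0:ℝ) (2*Real.pi),
      ‖f (Complex.exp (θ * Complex.I))‖ - (f (Complex.exp (θ * Complex.I))).re = 0 := by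
    have hcre : Continuous fun θ : ℝ => (f (Complex.exp (θ * Complex.I))).re :=
      Complex.continuous_re.comp hcont_circ
    apply aux_zero
    · exact hcont_circ.norm.sub hcre
    · intro θ
      have := Complex.re_le_norm (f (Complex.exp (θ * Complex.I)))
      linarith
    · rw [intervalIntegral.integral_sub (hcont_circ.norm.intervalIntegrable _ _)
        (hcre.intervalIntegrable _ _), hnormint, hre]
      ring
  have hsphere : ∀ z ∈ Metric.sphere (0:ℂ) 1, (f z).im = 0 ∧ 0 ≤ (f z).re := by
    intro z hz
    have hz1 : ‖z‖ = 1 := by simpa using hz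
    obtain ⟨θ, hθ, hθz⟩ := exists_angle z hz1
    have h1 : ‖f z‖ = (f z).re := by
      have := hbd θ hθ
      rw [hθz] at this
      linarith
    have h2 : (f z).re^2 + (f z).im^2 = ‖f z‖^2 := by
      rw [Complex.sq_norm, Complex.normSq_apply]
      ring
    rw [h1] at h2
    have h3 : (f z).im ^ 2 = 0 := by linarith
    have him : (f z).im = 0 := by
      exact pow_eq_zero_iff two_ne_zero |>.1 h3
    exact ⟨him, h1 ▸ norm_nonneg _⟩
  -- maximum principle: exp(± i f) bounded by 1
  have hbound : ∀ a : ℂ, DifferentiableOn ℂ (fun z => Complex.exp (a * f z)) (Metric.ball 0 1) →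
      ContinuousOn (fun z => Complex.exp (a * f z)) (Metric.closedBall 0 1) →
      (∀ z ∈ Metric.sphere (0:ℂ) 1, (a * f z).re ≤ 0) →
      ∀ z ∈ Metric.closedBall (0:ℂ) 1, ‖Complex.exp (a * f z)‖ ≤ 1 := by
    intro a hd hc ha z hz
    have hD : DiffContOnCl ℂ (fun z => Complex.exp (a * f z)) (Metric.ball 0 1) :=
      ⟨hd, by rw [closure_ball (0:ℂ) one_ne_zero]; exact hc⟩
    apply Complex.norm_le_of_forall_mem_frontier_norm_le Metric.isBounded_ball hD
    · intro w hw
      rw [frontier_ball (0:ℂ) one_ne_zero] at hw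
      rw [Complex.norm_exp]
      exact Real.exp_le_one_iff.2 (ha w hw)
    · rw [closure_ball (0:ℂ) one_ne_zero]
      exact hz
  have hdiff_if : DifferentiableOn ℂ (fun z => Complex.exp (Complex.I * f z))
      (Metric.ball 0 1) := (hfd.const_mul _).cexp
  have hcont_if : ContinuousOn (fun z => Complex.exp (Complex.I * f z))
      (Metric.closedBall 0 1) := Complex.continuous_exp.comp_continuousOn
      (continuousOn_const.mul hfc)
  have hup := hbound Complex.I hdiff_if hcont_if (by
    intro z hz
    have := (hsphere z hz).1
    simp [Complex.mul_re, this])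
  have hdown := hbound (-Complex.I) ((hfd.const_mul _).cexp)
    (Complex.continuous_exp.comp_continuousOn (continuousOn_const.mul hfc)) (by
    intro z hz
    have := (hsphere z hz).1
    simp [Complex.mul_re, this])
  -- imaginary part vanishes on the closed ball
  have him : ∀ z ∈ Metric.closedBall (0:ℂ) 1, (f z).im = 0 := by
    intro z hz
    have h1 := hup z hz
    have h2 := hdown z hz
    rw [Complex.norm_exp] at h1 h2
    simp only [Complex.mul_re, Complex.I_re, Complex.I_im, Complex.neg_re, Complex.neg_im] at h1 h2
    rw [Real.exp_le_one_iff] at h1 h2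
    nlinarith
  -- exp (i f) has constant modulus one, hence is constant
  have hnorm_if : ∀ z ∈ Metric.closedBall (0:ℂ) 1, ‖Complex.exp (Complex.I * f z)‖ = 1 := by
    intro z hz
    rw [Complex.norm_exp]
    simp [Complex.mul_re, him z hz]
  have hmaxon : IsMaxOn (norm ∘ (fun z => Complex.exp (Complex.I * f z))) (Metric.ball 0 1) 0 := by
    intro z hz
    show ‖Complex.exp (Complex.I * f z)‖ ≤ ‖Complex.exp (Complex.I * f 0)‖
    rw [hnorm_if z (Metric.ball_subset_closedBall hz),
      hnorm_if 0 (Metric.ball_subset_closedBall (Metric.mem_ball_self one_pos))]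
  have huconst := Complex.eqOn_of_isPreconnected_of_isMaxOn_norm
    (convex_ball (0:ℂ) 1).isPreconnected Metric.isOpen_ball hdiff_if
    (Metric.mem_ball_self one_pos) hmaxon
  -- each value of re f on the ball lies in 1 + 2πℤ
  have hS : ∀ z ∈ Metric.ball (0:ℂ) 1, ∃ k : ℤ, (f z).re = 1 + (k:ℝ)*(2*Real.pi) := by
    intro z hz
    have h1 : Complex.exp (Complex.I * f z) = Complex.exp (Complex.I * f 0) := huconst hz
    obtain ⟨k, hk⟩ := Complex.exp_eq_exp_iff_exists_int.1 h1
    rw [hf0, mul_one] at hk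
    have h2 : Complex.I * f z = Complex.I * (1 + (k:ℂ)*(2*Real.pi)) := by
      rw [hk]; push_cast; ring
    have h3 : f z = 1 + (k:ℂ)*(2*Real.pi) := mul_left_cancel₀ Complex.I_ne_zero h2
    refine ⟨k, ?_⟩
    rw [h3]
    push_cast
    simp
  -- connectedness forces re f = 1 on the ball
  have hone : ∀ z ∈ Metric.ball (0:ℂ) 1, (f z).re = 1 := by
    by_contra hcon
    push_neg at hcon
    obtain ⟨z1, hz1, hne⟩ := hcon
    obtain ⟨k, hk⟩ := hS z1 hz1
    have hk0 : k ≠ 0 := by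
      rintro rfl
      apply hne
      rw [hk]
      push_cast
      ring
    set S := (fun z => (f z).re) '' (Metric.ball (0:ℂ) 1) with hSdef
    have hpre : IsPreconnected S := (convex_ball (0:ℂ) 1).isPreconnected.image _
      (Complex.continuous_re.comp_continuousOn (hfc.mono Metric.ball_subset_closedBall))
    have hord := hpre.ordConnected
    have h1S : (1:ℝ) ∈ S := ⟨0, Metric.mem_ball_self one_pos, by
      show (f 0).re = 1
      rw [hf0, Complex.one_re]⟩
    have h2S : (f z1).re ∈ S := ⟨z1, hz1, rfl⟩
    have hgap : ∀ x ∈ S, x ≠ 1 - Real.pi ∧ x ≠ 1 + Real.pi := by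
      intro x hx
      obtain ⟨z2, hz2, hx2⟩ := hx
      obtain ⟨k2, hk2⟩ := hS z2 hz2
      have hxk : x = 1 + (k2:ℝ)*(2*Real.pi) := by rw [← hx2]; exact hk2
      constructor
      · intro hcontra
        rw [hxk] at hcontra
        have h2k : (k2:ℝ)*2 = -1 := by
          have hpi : (k2:ℝ)*(2*Real.pi) = -Real.pi := by linarith
          have := mul_right_cancel₀ (ne_of_gt hπ) (by linarith [hpi] : ((k2:ℝ)*2) * Real.pi = (-1) * Real.pi)
          linarith [this]
        have hcast : ((k2*2 : ℤ):ℝ) = ((-1 : ℤ):ℝ) := by push_cast; linarith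
        have := Int.cast_injective hcast
        omega
      · intro hcontra
        rw [hxk] at hcontra
        have h2k : (k2:ℝ)*2 = 1 := by
          have hpi : (k2:ℝ)*(2*Real.pi) = Real.pi := by linarith
          have := mul_right_cancel₀ (ne_of_gt hπ) (by linarith [hpi] : ((k2:ℝ)*2) * Real.pi = 1 * Real.pi)
          linarith [this]
        have hcast : ((k2*2 : ℤ):ℝ) = ((1 : ℤ):ℝ) := by push_cast; linarith
        have := Int.cast_injective hcast
        omega
    rcases lt_or_gt_of_ne hk0 with hkneg | hkpos
    · have hklr : (k:ℝ) ≤ -1 := by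
        have hk1 : k ≤ -1 := by omega
        exact_mod_cast hk1
      have hmem : (1 - Real.pi) ∈ Set.Icc ((f z1).re) 1 := by
        constructor
        · rw [hk]; nlinarith
        · linarith
      have hin := hord.out h2S h1S hmem
      exact (hgap _ hin).1 rfl
    · have hklr : (1:ℝ) ≤ (k:ℝ) := by
        have hk1 : 1 ≤ k := by omega
        exact_mod_cast hk1
      have hmem : (1 + Real.pi) ∈ Set.Icc (1:ℝ) ((f z1).re) := by
        constructor
        · linarith
        · rw [hk]; nlinarith
      have hin := hord.out h1S h2S hmem
      exact (hgap _ hin).2 rfl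
  -- f ≡ 1 on the closed ball
  have hfone : ∀ z ∈ Metric.ball (0:ℂ) 1, f z = 1 := by
    intro z hz
    apply Complex.ext
    · rw [hone z hz, Complex.one_re]
    · rw [him z (Metric.ball_subset_closedBall hz), Complex.one_im]
  have hfone' : ∀ z ∈ Metric.closedBall (0:ℂ) 1, f z = 1 :=
    eq_on_closed_of_eq_on_ball f 1 hfc hfone
  -- hence ‖g‖ ≡ 1 on the closed ball
  have hgnorm1 : ∀ z ∈ Metric.closedBall (0:ℂ) 1, ‖g z‖ = 1 := by
    intro z hz
    have h1 : ‖f z‖ = 1 := by rw [hfone' z hz]; simp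
    rw [hfnorm' z, Real.exp_eq_one_iff] at h1
    have h2 : (L z).re = 0 := by
      rcases mul_eq_zero.1 h1 with h | h
      · exact absurd h (ne_of_gt hq)
      · exact h
    rw [hgnorm z hz, h2, Real.exp_zero]
  -- maximum modulus forces g constant
  have hgmaxon : IsMaxOn (norm ∘ g) (Metric.ball 0 1) 0 := by
    intro z hz
    show ‖g z‖ ≤ ‖g 0‖
    rw [hgnorm1 z (Metric.ball_subset_closedBall hz),
      hgnorm1 0 (Metric.ball_subset_closedBall (Metric.mem_ball_self one_pos))]
  have hgconst := Complex.eqOn_of_isPreconnected_of_isMaxOn_norm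
    (convex_ball (0:ℂ) 1).isPreconnected Metric.isOpen_ball hg
    (Metric.mem_ball_self one_pos) hgmaxon
  have hgball : ∀ z ∈ Metric.ball (0:ℂ) 1, g z = 1 := by
    intro z hz
    have := hgconst hz
    rw [hg0] at this
    exact this
  exact eq_on_closed_of_eq_on_ball g 1 hgc hgball
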